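/- Let G be a connected graph and let G** be the graph obtained from G by the following construction: for each vertex v of G take an independent set I_v of size deg_G(v) (the sets I_v pairwise disjoint); for each edge uv of G place one edge between I_u and I_v so that these edges form a perfect matching on the union of the I_v's; then for each v add two adjacent new vertices x_v and y_v joined to every vertex of I_v. Then every two proper 4-colorings of G** are Kempe equivalent. -/

import Mathlib

open SimpleGraph

variable {V : Type*}

/-- `c` is a proper `k`-coloring of the simple graph `G`. -/
def IsProperColoring (G : SimpleGraph V) (k : ℕ) (c : V → Fin k) : Prop :=
  ∀ ⦃u v : V⦄, G.Adj u v → c u ≠ c v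

/-- The subgraph of `G` spanned by the vertices colored `i` or `j` (all other
vertices are isolated in this graph). -/
def twoColorSub (G : SimpleGraph V) {k : ℕ} (c : V → Fin k) (i j : Fin k) :
    SimpleGraph V where
  Adj u v := G.Adj u v ∧ (c u = i ∨ c u = j) ∧ (c v = i ∨ c v = j)
  symm := ⟨fun _ _ h => ⟨h.1.symm, h.2.2, h.2.1⟩⟩
  loopless := ⟨fun v h => G.loopless.irrefl v h.1⟩

/-- A single Kempe change: swap the colors `i` and `j` on the connected component
of the `(i,j)`-colored subgraph containing the vertex `v₀`. -/
def KempeStep (G : SimpleGraph V) {k : ℕ} (c c' : V → Fin k) : Prop :=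
  ∃ i j : Fin k, i ≠ j ∧ ∃ v₀ : V,
    (∀ v : V, (twoColorSub G c i j).Reachable v₀ v →
      (c v = i → c' v = j) ∧ (c v = j → c' v = i) ∧ (c v ≠ i → c v ≠ j → c' v = c v)) ∧
    (∀ v : V, ¬ (twoColorSub G c i j).Reachable v₀ v → c' v = c v)

/-- Two colorings are Kempe equivalent if one is obtained from the other by a
finite sequence of Kempe changes. -/
def KempeEquiv (G : SimpleGraph V) {k : ℕ} (c c' : V → Fin k) : Prop :=
  Relation.ReflTransGen (fun a b : V → Fin k => KempeStep G a b) c c'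

/-- `G` is obtained from a bipartite graph with parts `S` and `Sᶜ` by adding the
edges of `H`, each of which joins two vertices in the same part. -/
def IsBPlusE (G : SimpleGraph V) (S : Set V) (H : SimpleGraph V) : Prop :=
  H ≤ G ∧
  (∀ u v : V, G.Adj u v → ¬ H.Adj u v → (u ∈ S ↔ v ∉ S)) ∧
  (∀ u v : V, H.Adj u v → (u ∈ S ↔ v ∈ S))

/-- The graph `G**` of Chen et al.: for each vertex `v` of `G` take the independent
set `I_v` of darts of `G` starting at `v` (so `|I_v| = deg v`); the darts `d` and
`d.symm` are matched, giving one edge between `I_u` and `I_v` for each edge `uv`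
of `G`, and these edges form a perfect matching on the darts; finally two adjacent
new vertices `x_v = (v,0)` and `y_v = (v,1)` are joined to every vertex of `I_v`. -/
def doubleStar {V : Type*} (G : SimpleGraph V) :
    SimpleGraph (G.Dart ⊕ V × Fin 2) :=
  SimpleGraph.fromRel (fun a b =>
    (∃ d : G.Dart, a = Sum.inl d ∧ b = Sum.inl d.symm) ∨
    (∃ (d : G.Dart) (p : V × Fin 2), a = Sum.inl d ∧ b = Sum.inr p ∧ d.fst = p.1) ∨
    (∃ v : V, a = Sum.inr (v, 0) ∧ b = Sum.inr (v, 1)))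
section KempeAux

variable {W : Type*}

/-- The subgraph of `H` induced (as a graph on the same vertex set) by a finite
set `A` of vertices. -/
def indG (H : SimpleGraph W) (A : Finset W) : SimpleGraph W where
  Adj a b := H.Adj a b ∧ a ∈ A ∧ b ∈ A
  symm := ⟨fun _ _ h => ⟨h.1.symm, h.2.2, h.2.1⟩⟩
  loopless := ⟨fun a h => H.loopless.irrefl a h.1⟩

lemma reach_eq_of_isolated {P : SimpleGraph W} {v₀ w : W}
    (h : ∀ u, ¬ P.Adj v₀ u) (hr : P.Reachable v₀ w) : w = v₀ := by
  obtain ⟨p⟩ := hr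
  cases p with
  | nil => rfl
  | cons ha _ => exact absurd ha (h _)

lemma reach_transfer {P Q : SimpleGraph W} {v : W}
    (hPQ : ∀ a b, P.Adj a b → Q.Adj a b)
    (hQP : ∀ a b, Q.Adj a b → a ≠ v → b ≠ v → P.Adj a b)
    (huniq : ∀ b b', Q.Adj v b → Q.Adj v b' → b = b')
    {v₀ w : W} (h₀ : v₀ ≠ v) (hw : w ≠ v) :
    Q.Reachable v₀ w ↔ P.Reachable v₀ w := by
  constructor
  · rintro ⟨p⟩
    have key : ∀ n (a : W) (p : Q.Walk a w), p.length ≤ n → a ≠ v → P.Reachable a w := by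
      intro n
      induction n with
      | zero =>
        intro a p hl ha
        cases p with
        | nil => exact SimpleGraph.Reachable.refl _
        | cons h q => simp [SimpleGraph.Walk.length_cons] at hl
      | succ n ih =>
        intro a p hl ha
        cases p with
        | nil => exact SimpleGraph.Reachable.refl _
        | cons h q =>
          rename_i b
          by_cases hb : b = v
          · subst hb
            cases q with
            | nil => exact absurd rfl hw
            | cons h' q' =>
              rename_i c
              have hac : a = c := huniq a c h.symm h'
              subst hac
              refine ih a q' ?_ ha
              simp [SimpleGraph.Walk.length_cons] at hl ⊢
              omega
          · refine ((hQP a b h ha hb).reachable).trans (ih b q ?_ hb)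
            simp [SimpleGraph.Walk.length_cons] at hl
            omega
    exact key p.length v₀ p le_rfl h₀
  · intro hp
    exact hp.mono (fun a b h => hPQ a b h)

lemma twoColorSub_comm (G : SimpleGraph W) {k : ℕ} (c : W → Fin k) (i j : Fin k) :
    twoColorSub G c i j = twoColorSub G c j i := by
  ext a b
  show G.Adj a b ∧ _ ∧ _ ↔ G.Adj a b ∧ _ ∧ _
  tauto

lemma kstep_proper {H : SimpleGraph W} {x y : W → Fin 4}
    (h : KempeStep H x y) (hx : IsProperColoring H 4 x) :
    IsProperColoring H 4 y := by
  obtain ⟨i, j, hij, v₀, hR, hNR⟩ := h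
  have tri : ∀ t, ((twoColorSub H x i j).Reachable v₀ t ∧ x t = i ∧ y t = j)
      ∨ ((twoColorSub H x i j).Reachable v₀ t ∧ x t = j ∧ y t = i)
      ∨ y t = x t := by
    intro t
    by_cases hr : (twoColorSub H x i j).Reachable v₀ t
    · obtain ⟨h1, h2, h3⟩ := hR t hr
      by_cases hti : x t = i
      · exact Or.inl ⟨hr, hti, h1 hti⟩
      · by_cases htj : x t = j
        · exact Or.inr (Or.inl ⟨hr, htj, h2 htj⟩)
        · exact Or.inr (Or.inr (h3 hti htj))
    · exact Or.inr (Or.inr (hNR t hr))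
  have main : ∀ u w, H.Adj u w →
      (((twoColorSub H x i j).Reachable v₀ u ∧ x u = i ∧ y u = j) ∨
       ((twoColorSub H x i j).Reachable v₀ u ∧ x u = j ∧ y u = i)) →
      y w = x w → y u ≠ y w := by
    rintro u w huw (⟨hr, hxu, hyu⟩ | ⟨hr, hxu, hyu⟩) hyw heq
    · rw [hyu, hyw] at heq
      have hxw : x w = j := heq.symm
      have hadj : (twoColorSub H x i j).Adj u w := ⟨huw, Or.inl hxu, Or.inr hxw⟩
      have hrw := hr.trans hadj.reachable
      have := (hR w hrw).2.1 hxw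
      rw [hyw, hxw] at this
      exact hij this.symm
    · rw [hyu, hyw] at heq
      have hxw : x w = i := heq.symm
      have hadj : (twoColorSub H x i j).Adj u w := ⟨huw, Or.inr hxu, Or.inl hxw⟩
      have hrw := hr.trans hadj.reachable
      have := (hR w hrw).1 hxw
      rw [hyw, hxw] at this
      exact hij this
  intro u w huw heq
  rcases tri u with h1 | h1 | h1
  · rcases tri w with h2 | h2 | h2
    · exact hx huw (h1.2.1.trans h2.2.1.symm)
    · rw [h1.2.2, h2.2.2] at heq; exact hij heq.symm
    · exact main u w huw (Or.inl h1) h2 heq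
  · rcases tri w with h2 | h2 | h2
    · rw [h1.2.2, h2.2.2] at heq; exact hij heq
    · exact hx huw (h1.2.1.trans h2.2.1.symm)
    · exact main u w huw (Or.inr h1) h2 heq
  · rcases tri w with h2 | h2 | h2
    · exact main w u huw.symm (Or.inl h2) h1 heq.symm
    · exact main w u huw.symm (Or.inr h2) h1 heq.symm
    · rw [h1, h2] at heq; exact hx huw heq

end KempeAux
section KempeAux2

variable {W : Type*}

lemma lift_caseA {H : SimpleGraph W} [DecidableEq W] {A : Finset W} {v : W}
    {x y z : W → Fin 4} {i j : Fin 4} {v₀ : W}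
    (hij : i ≠ j) (hv₀ : v₀ ≠ v)
    (hR : ∀ w, (twoColorSub (indG H (A.erase v)) x i j).Reachable v₀ w →
      (x w = i → y w = j) ∧ (x w = j → y w = i) ∧ (x w ≠ i → x w ≠ j → y w = x w))
    (hNR : ∀ w, ¬ (twoColorSub (indG H (A.erase v)) x i j).Reachable v₀ w → y w = x w)
    (hz : ∀ w, w ≠ v → z w = x w)
    (hzp : IsProperColoring (indG H A) 4 z)
    (hyB : IsProperColoring (indG H (A.erase v)) 4 y)
    (hzi : z v ≠ i) (hzj : z v ≠ j) :
    ∃ z', KempeStep (indG H A) z z' ∧ (∀ w, w ≠ v → z' w = y w) ∧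
      IsProperColoring (indG H A) 4 z' := by
  classical
  have hPQ : ∀ a b, (twoColorSub (indG H (A.erase v)) x i j).Adj a b →
      (twoColorSub (indG H A) z i j).Adj a b := by
    rintro a b ⟨⟨hH, ha, hb⟩, hc1, hc2⟩
    refine ⟨⟨hH, Finset.mem_of_mem_erase ha, Finset.mem_of_mem_erase hb⟩, ?_, ?_⟩
    · rwa [hz a (Finset.ne_of_mem_erase ha)]
    · rwa [hz b (Finset.ne_of_mem_erase hb)]
  have hQP : ∀ a b, (twoColorSub (indG H A) z i j).Adj a b → a ≠ v → b ≠ v →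
      (twoColorSub (indG H (A.erase v)) x i j).Adj a b := by
    rintro a b ⟨⟨hH, ha, hb⟩, hc1, hc2⟩ hav hbv
    refine ⟨⟨hH, Finset.mem_erase.2 ⟨hav, ha⟩, Finset.mem_erase.2 ⟨hbv, hb⟩⟩, ?_, ?_⟩
    · rwa [← hz a hav]
    · rwa [← hz b hbv]
  have hQv : ∀ b, ¬ (twoColorSub (indG H A) z i j).Adj v b := by
    rintro b ⟨hadj, hc1, hc2⟩
    rcases hc1 with h | h
    · exact hzi h
    · exact hzj h
  have htrans : ∀ w, w ≠ v →
      ((twoColorSub (indG H A) z i j).Reachable v₀ w ↔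
        (twoColorSub (indG H (A.erase v)) x i j).Reachable v₀ w) :=
    fun w hw => reach_transfer hPQ hQP (fun b b' hb _ => absurd hb (hQv b)) hv₀ hw
  have ytri : ∀ t, (x t = i ∧ y t = j) ∨ (x t = j ∧ y t = i) ∨ y t = x t := by
    intro t
    by_cases hr : (twoColorSub (indG H (A.erase v)) x i j).Reachable v₀ t
    · obtain ⟨h1, h2, h3⟩ := hR t hr
      by_cases hti : x t = i
      · exact Or.inl ⟨hti, h1 hti⟩
      · by_cases htj : x t = j
        · exact Or.inr (Or.inl ⟨htj, h2 htj⟩)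
        · exact Or.inr (Or.inr (h3 hti htj))
    · exact Or.inr (Or.inr (hNR t hr))
  refine ⟨fun w => if w = v then z v else y w, ⟨i, j, hij, v₀, ?_, ?_⟩, ?_, ?_⟩
  · intro w hw
    by_cases hwv : w = v
    · subst hwv
      exact ⟨fun h => absurd h hzi, fun h => absurd h hzj, fun _ _ => by simp⟩
    · have hPr := (htrans w hwv).1 hw
      obtain ⟨h1, h2, h3⟩ := hR w hPr
      simp only [if_neg hwv]
      rw [hz w hwv]
      exact ⟨h1, h2, h3⟩
  · intro w hw
    by_cases hwv : w = v
    · subst hwv; simp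
    · have hNPr : ¬ (twoColorSub (indG H (A.erase v)) x i j).Reachable v₀ w :=
        fun h => hw ((htrans w hwv).2 h)
      simp only [if_neg hwv]
      rw [hNR w hNPr, hz w hwv]
  · intro w hw
    simp only [if_neg hw]
  · have claim : ∀ u, (indG H A).Adj v u → z v ≠ y u := by
      intro u hu
      have hune : u ≠ v := hu.1.ne'
      rcases ytri u with ⟨_, hyu⟩ | ⟨_, hyu⟩ | hyu
      · rw [hyu]; exact hzj
      · rw [hyu]; exact hzi
      · rw [hyu, ← hz u hune]
        exact hzp hu
    intro p q hpq
    by_cases hp : p = v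
    · by_cases hq : q = v
      · rw [hp, hq] at hpq
        exact absurd hpq ((indG H A).loopless.irrefl v)
      · simp only [if_pos hp, if_neg hq]
        rw [hp] at hpq
        exact claim q hpq
    · by_cases hq : q = v
      · simp only [if_neg hp, if_pos hq]
        rw [hq] at hpq
        exact fun h => claim p hpq.symm h.symm
      · simp only [if_neg hp, if_neg hq]
        exact hyB ⟨hpq.1, Finset.mem_erase.2 ⟨hp, hpq.2.1⟩, Finset.mem_erase.2 ⟨hq, hpq.2.2⟩⟩

end KempeAux2
section KempeAux3

variable {W : Type*}

lemma fin4_aux : ∀ i j : Fin 4, i ≠ j →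
    ∃ p q : Fin 4, p ≠ i ∧ p ≠ j ∧ q ≠ i ∧ q ≠ j ∧ p ≠ q := by decide

lemma lift_eq {H : SimpleGraph W} [DecidableEq W] {A : Finset W} {v : W}
    {x y z : W → Fin 4} {i j : Fin 4} {v₀ : W}
    (u1 u2 u3 : W) (hnb : ∀ u, H.Adj v u → u ∈ A → u = u1 ∨ u = u2 ∨ u = u3)
    (hij : i ≠ j) (hv₀ : v₀ ≠ v)
    (hR : ∀ w, (twoColorSub (indG H (A.erase v)) x i j).Reachable v₀ w →
      (x w = i → y w = j) ∧ (x w = j → y w = i) ∧ (x w ≠ i → x w ≠ j → y w = x w))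
    (hNR : ∀ w, ¬ (twoColorSub (indG H (A.erase v)) x i j).Reachable v₀ w → y w = x w)
    (hz : ∀ w, w ≠ v → z w = x w)
    (hzp : IsProperColoring (indG H A) 4 z)
    (hyB : IsProperColoring (indG H (A.erase v)) 4 y)
    (hzv : z v = i) :
    ∃ z', KempeEquiv (indG H A) z z' ∧ (∀ w, w ≠ v → z' w = y w) ∧
      IsProperColoring (indG H A) 4 z' := by
  classical
  have hPQ : ∀ a b, (twoColorSub (indG H (A.erase v)) x i j).Adj a b →
      (twoColorSub (indG H A) z i j).Adj a b := by
    rintro a b ⟨⟨hH, ha, hb⟩, hc1, hc2⟩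
    refine ⟨⟨hH, Finset.mem_of_mem_erase ha, Finset.mem_of_mem_erase hb⟩, ?_, ?_⟩
    · rwa [hz a (Finset.ne_of_mem_erase ha)]
    · rwa [hz b (Finset.ne_of_mem_erase hb)]
  have hQP : ∀ a b, (twoColorSub (indG H A) z i j).Adj a b → a ≠ v → b ≠ v →
      (twoColorSub (indG H (A.erase v)) x i j).Adj a b := by
    rintro a b ⟨⟨hH, ha, hb⟩, hc1, hc2⟩ hav hbv
    refine ⟨⟨hH, Finset.mem_erase.2 ⟨hav, ha⟩, Finset.mem_erase.2 ⟨hbv, hb⟩⟩, ?_, ?_⟩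
    · rwa [← hz a hav]
    · rwa [← hz b hbv]
  have ytri : ∀ t, (x t = i ∧ y t = j) ∨ (x t = j ∧ y t = i) ∨ y t = x t := by
    intro t
    by_cases hr : (twoColorSub (indG H (A.erase v)) x i j).Reachable v₀ t
    · obtain ⟨h1, h2, h3⟩ := hR t hr
      by_cases hti : x t = i
      · exact Or.inl ⟨hti, h1 hti⟩
      · by_cases htj : x t = j
        · exact Or.inr (Or.inl ⟨htj, h2 htj⟩)
        · exact Or.inr (Or.inr (h3 hti htj))
    · exact Or.inr (Or.inr (hNR t hr))
  by_cases huniq : ∀ b b', (twoColorSub (indG H A) z i j).Adj v b →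
      (twoColorSub (indG H A) z i j).Adj v b' → b = b'
  · -- at most one neighbour of v in the two-colored subgraph : direct lift
    have htrans : ∀ w, w ≠ v →
        ((twoColorSub (indG H A) z i j).Reachable v₀ w ↔
          (twoColorSub (indG H (A.erase v)) x i j).Reachable v₀ w) :=
      fun w hw => reach_transfer hPQ hQP huniq hv₀ hw
    refine ⟨fun w => if w = v then
        (if (twoColorSub (indG H A) z i j).Reachable v₀ v then j else i) else y w,
      Relation.ReflTransGen.single ⟨i, j, hij, v₀, ?_, ?_⟩, ?_, ?_⟩
    · intro w hw
      by_cases hwv : w = v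
      · have hzw : z w = i := by rw [hwv]; exact hzv
        have hrv : (twoColorSub (indG H A) z i j).Reachable v₀ v := by rw [← hwv]; exact hw
        refine ⟨fun _ => ?_, fun h => absurd (hzw.symm.trans h) hij, fun h _ => absurd hzw h⟩
        show (if w = v then
          (if (twoColorSub (indG H A) z i j).Reachable v₀ v then j else i) else y w) = j
        rw [if_pos hwv, if_pos hrv]
      · have hPr := (htrans w hwv).1 hw
        obtain ⟨h1, h2, h3⟩ := hR w hPr
        simp only [if_neg hwv]
        rw [hz w hwv]
        exact ⟨h1, h2, h3⟩
    · intro w hw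
      by_cases hwv : w = v
      · have hnr : ¬ (twoColorSub (indG H A) z i j).Reachable v₀ v := by
          rw [← hwv]; exact hw
        show (if w = v then
          (if (twoColorSub (indG H A) z i j).Reachable v₀ v then j else i) else y w) = z w
        rw [if_pos hwv, if_neg hnr, hwv]
        exact hzv.symm
      · have hNPr : ¬ (twoColorSub (indG H (A.erase v)) x i j).Reachable v₀ w :=
          fun h => hw ((htrans w hwv).2 h)
        simp only [if_neg hwv]
        rw [hNR w hNPr, hz w hwv]
    · intro w hw
      simp only [if_neg hw]
    · have claim : ∀ u, (indG H A).Adj v u →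
          (if (twoColorSub (indG H A) z i j).Reachable v₀ v then j else i) ≠ y u := by
        intro u hu
        have hune : u ≠ v := hu.1.ne'
        by_cases hzuj : z u = j
        · have hQadj : (twoColorSub (indG H A) z i j).Adj v u :=
            ⟨hu, Or.inl hzv, Or.inr hzuj⟩
          by_cases hQr : (twoColorSub (indG H A) z i j).Reachable v₀ v
          · have hQru : (twoColorSub (indG H A) z i j).Reachable v₀ u :=
              hQr.trans hQadj.reachable
            have hPru := (htrans u hune).1 hQru
            have hxu : x u = j := by rw [← hz u hune]; exact hzuj
            have hyu : y u = i := (hR u hPru).2.1 hxu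
            rw [if_pos hQr, hyu]
            exact hij.symm
          · have hQru : ¬ (twoColorSub (indG H A) z i j).Reachable v₀ u :=
              fun h => hQr (h.trans hQadj.symm.reachable)
            have hPru : ¬ (twoColorSub (indG H (A.erase v)) x i j).Reachable v₀ u :=
              fun h => hQru ((htrans u hune).2 h)
            have hxu : x u = j := by rw [← hz u hune]; exact hzuj
            have hyu : y u = j := (hNR u hPru).trans hxu
            rw [if_neg hQr, hyu]
            exact hij
        · by_cases hzui : z u = i
          · exact absurd (hzv.trans hzui.symm) (hzp hu)
          · have hxui : x u ≠ i := by rw [← hz u hune]; exact hzui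
            have hxuj : x u ≠ j := by rw [← hz u hune]; exact hzuj
            rcases ytri u with ⟨h, _⟩ | ⟨h, _⟩ | hyu
            · exact absurd h hxui
            · exact absurd h hxuj
            · rw [hyu, ← hz u hune]
              split_ifs
              · exact fun h => hzuj h.symm
              · exact fun h => hzui h.symm
      intro p q hpq
      by_cases hp : p = v
      · by_cases hq : q = v
        · rw [hp, hq] at hpq
          exact absurd hpq ((indG H A).loopless.irrefl v)
        · simp only [if_pos hp, if_neg hq]
          rw [hp] at hpq
          exact claim q hpq
      · by_cases hq : q = v
        · simp only [if_neg hp, if_pos hq]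
          rw [hq] at hpq
          exact fun h => claim p hpq.symm h.symm
        · simp only [if_neg hp, if_neg hq]
          exact hyB ⟨hpq.1, Finset.mem_erase.2 ⟨hp, hpq.2.1⟩, Finset.mem_erase.2 ⟨hq, hpq.2.2⟩⟩
  · -- at least two neighbours : recolor v to a free color first
    push_neg at huniq
    obtain ⟨b1, b2, hb1, hb2, hb12⟩ := huniq
    have hzb1 : z b1 = j := by
      rcases hb1.2.2 with h | h
      · exact absurd (hzv.trans h.symm) (hzp hb1.1)
      · exact h
    have hzb2 : z b2 = j := by
      rcases hb2.2.2 with h | h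
      · exact absurd (hzv.trans h.symm) (hzp hb2.1)
      · exact h
    obtain ⟨p, q, hpi, hpj, hqi, hqj, hpq⟩ := fin4_aux i j hij
    have hfree : ∃ m : Fin 4, m ≠ i ∧ m ≠ j ∧ ∀ u, (indG H A).Adj v u → z u ≠ m := by
      by_cases hp' : ∃ u, (indG H A).Adj v u ∧ z u = p
      · by_cases hq' : ∃ u, (indG H A).Adj v u ∧ z u = q
        · exfalso
          obtain ⟨b3, hb3, hzb3⟩ := hp'
          obtain ⟨b4, hb4, hzb4⟩ := hq'
          have h13 : b1 ≠ b3 := by intro h; rw [h, hzb3] at hzb1; exact hpj hzb1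
          have h14 : b1 ≠ b4 := by intro h; rw [h, hzb4] at hzb1; exact hqj hzb1
          have h23 : b2 ≠ b3 := by intro h; rw [h, hzb3] at hzb2; exact hpj hzb2
          have h24 : b2 ≠ b4 := by intro h; rw [h, hzb4] at hzb2; exact hqj hzb2
          have h34 : b3 ≠ b4 := by intro h; rw [h, hzb4] at hzb3; exact hpq hzb3.symm
          have hmem : ∀ u, (indG H A).Adj v u → u ∈ ({u1, u2, u3} : Finset W) := by
            intro u h
            rcases hnb u h.1 h.2.2 with h' | h' | h' <;> simp [h']
          have hsub : ({b1, b2, b3, b4} : Finset W) ⊆ ({u1, u2, u3} : Finset W) := by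
            intro t ht
            simp only [Finset.mem_insert, Finset.mem_singleton] at ht
            rcases ht with h | h | h | h
            · rw [h]; exact hmem b1 hb1.1
            · rw [h]; exact hmem b2 hb2.1
            · rw [h]; exact hmem b3 hb3
            · rw [h]; exact hmem b4 hb4
          have hcard : ({b1, b2, b3, b4} : Finset W).card = 4 := by
            rw [Finset.card_insert_of_notMem (by simp [hb12, h13, h14]),
              Finset.card_insert_of_notMem (by simp [h23, h24]),
              Finset.card_insert_of_notMem (by simp [h34]), Finset.card_singleton]
          have h4le : 4 ≤ ({u1, u2, u3} : Finset W).card := by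
            rw [← hcard]; exact Finset.card_le_card hsub
          have h3ge : ({u1, u2, u3} : Finset W).card ≤ 3 := by
            refine le_trans (Finset.card_insert_le _ _) ?_
            refine le_trans (Nat.add_le_add_right (Finset.card_insert_le _ _) 1) ?_
            simp
          omega
        · push_neg at hq'
          exact ⟨q, hqi, hqj, fun u hu h => hq' u hu h⟩
      · push_neg at hp'
        exact ⟨p, hpi, hpj, fun u hu h => hp' u hu h⟩
    obtain ⟨m, hmi, hmj, hm⟩ := hfree
    have hstep1 : KempeStep (indG H A) z (Function.update z v m) := by
      refine ⟨i, m, fun h => hmi h.symm, v, ?_, ?_⟩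
      · intro w hw
        have hiso : ∀ u, ¬ (twoColorSub (indG H A) z i m).Adj v u := by
          rintro u ⟨hadj, _, hcu⟩
          rcases hcu with h | h
          · exact (hzp hadj) (hzv.trans h.symm)
          · exact hm u hadj h
        have hwv : w = v := reach_eq_of_isolated hiso hw
        subst hwv
        refine ⟨fun _ => by simp, fun h => absurd (hzv.symm.trans h).symm hmi, fun h _ => absurd hzv h⟩
      · intro w hw
        have hwv : w ≠ v := by rintro rfl; exact hw (SimpleGraph.Reachable.refl _)
        simp [Function.update_of_ne hwv]
    have hz1 : ∀ w, w ≠ v → Function.update z v m w = x w := by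
      intro w hw
      rw [Function.update_of_ne hw]
      exact hz w hw
    have hz1p : IsProperColoring (indG H A) 4 (Function.update z v m) := by
      intro a b hab
      have hne := hab.1.ne
      by_cases ha : a = v
      · by_cases hb : b = v
        · rw [ha, hb] at hab; exact absurd hab ((indG H A).loopless.irrefl v)
        · rw [ha, Function.update_self, Function.update_of_ne hb]
          rw [ha] at hab
          exact fun h => hm b hab h.symm
      · by_cases hb : b = v
        · rw [hb, Function.update_self, Function.update_of_ne ha]
          rw [hb] at hab
          exact fun h => hm a hab.symm h
        · rw [Function.update_of_ne ha, Function.update_of_ne hb]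
          exact hzp hab
    have hz1i : Function.update z v m v ≠ i := by rw [Function.update_self]; exact hmi
    have hz1j : Function.update z v m v ≠ j := by rw [Function.update_self]; exact hmj
    obtain ⟨z', hstep2, hzy, hzp'⟩ :=
      lift_caseA hij hv₀ hR hNR hz1 hz1p hyB hz1i hz1j
    exact ⟨z', Relation.ReflTransGen.head hstep1 (Relation.ReflTransGen.single hstep2), hzy, hzp'⟩

end KempeAux3
section KempeAux4

variable {W : Type*}

lemma lift_one {H : SimpleGraph W} [DecidableEq W] {A : Finset W} {v : W}
    (u1 u2 u3 : W) (hnb : ∀ u, H.Adj v u → u ∈ A → u = u1 ∨ u = u2 ∨ u = u3)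
    {x y z : W → Fin 4}
    (hstep : KempeStep (indG H (A.erase v)) x y)
    (hz : ∀ w, w ≠ v → z w = x w)
    (hzp : IsProperColoring (indG H A) 4 z) :
    ∃ z', KempeEquiv (indG H A) z z' ∧ (∀ w, w ≠ v → z' w = y w) ∧
      IsProperColoring (indG H A) 4 z' := by
  classical
  have hxB : IsProperColoring (indG H (A.erase v)) 4 x := by
    intro a b hab
    have hav := Finset.ne_of_mem_erase hab.2.1
    have hbv := Finset.ne_of_mem_erase hab.2.2
    rw [← hz a hav, ← hz b hbv]
    exact hzp ⟨hab.1, Finset.mem_of_mem_erase hab.2.1, Finset.mem_of_mem_erase hab.2.2⟩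
  have hyB : IsProperColoring (indG H (A.erase v)) 4 y := kstep_proper hstep hxB
  obtain ⟨i, j, hij, v₀, hR, hNR⟩ := hstep
  by_cases hv₀ : v₀ = v
  · -- v₀ = v is isolated in the B-subgraph, so y = x off v
    have hiso : ∀ u, ¬ (twoColorSub (indG H (A.erase v)) x i j).Adj v₀ u := by
      rintro u ⟨hadj, _, _⟩
      exact (Finset.mem_erase.1 hadj.2.1).1 hv₀
    have hyx : ∀ w, w ≠ v → y w = x w := by
      intro w hw
      exact hNR w (fun hr => hw ((reach_eq_of_isolated hiso hr).trans hv₀))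
    exact ⟨z, Relation.ReflTransGen.refl,
      fun w hw => (hz w hw).trans (hyx w hw).symm, hzp⟩
  · by_cases hzi : z v = i
    · exact lift_eq u1 u2 u3 hnb hij hv₀ hR hNR hz hzp hyB hzi
    · by_cases hzj : z v = j
      · -- swap the roles of i and j
        have hR' : ∀ w, (twoColorSub (indG H (A.erase v)) x j i).Reachable v₀ w →
            (x w = j → y w = i) ∧ (x w = i → y w = j) ∧ (x w ≠ j → x w ≠ i → y w = x w) := by
          intro w hw
          rw [twoColorSub_comm] at hw
          obtain ⟨h1, h2, h3⟩ := hR w hw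
          exact ⟨h2, h1, fun a b => h3 b a⟩
        have hNR' : ∀ w, ¬ (twoColorSub (indG H (A.erase v)) x j i).Reachable v₀ w →
            y w = x w := by
          intro w hw
          refine hNR w (fun h => hw ?_)
          rw [twoColorSub_comm]
          exact h
        exact lift_eq u1 u2 u3 hnb hij.symm hv₀ hR' hNR' hz hzp hyB hzj
      · obtain ⟨z', hstep', h1, h2⟩ := lift_caseA hij hv₀ hR hNR hz hzp hyB hzi hzj
        exact ⟨z', Relation.ReflTransGen.single hstep', h1, h2⟩

lemma chain_lift {H : SimpleGraph W} [DecidableEq W] {A : Finset W} {v : W}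
    (u1 u2 u3 : W) (hnb : ∀ u, H.Adj v u → u ∈ A → u = u1 ∨ u = u2 ∨ u = u3)
    {x y : W → Fin 4} (h : KempeEquiv (indG H (A.erase v)) x y) :
    ∀ z, (∀ w, w ≠ v → z w = x w) → IsProperColoring (indG H A) 4 z →
    ∃ z', KempeEquiv (indG H A) z z' ∧ (∀ w, w ≠ v → z' w = y w) ∧
      IsProperColoring (indG H A) 4 z' := by
  have h' : Relation.ReflTransGen (KempeStep (indG H (A.erase v))) x y := h
  clear h
  induction h' with
  | refl => exact fun z hz hzp => ⟨z, Relation.ReflTransGen.refl, hz, hzp⟩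
  | tail h1 h2 ih =>
    intro z hz hzp
    obtain ⟨z₁, he1, hz1, hz1p⟩ := ih z hz hzp
    obtain ⟨z₂, he2, hz2, hz2p⟩ := lift_one u1 u2 u3 hnb h2 hz1 hz1p
    exact ⟨z₂, he1.trans he2, hz2, hz2p⟩

lemma main_ind {H : SimpleGraph W} [DecidableEq W]
    (hdeg : ∀ A : Finset W, A.Nonempty → ∃ v, v ∈ A ∧ ∃ u1 u2 u3 : W,
      ∀ u, H.Adj v u → u ∈ A → u = u1 ∨ u = u2 ∨ u = u3) :
    ∀ (n : ℕ) (A : Finset W), A.card ≤ n → ∀ c c' : W → Fin 4,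
      IsProperColoring (indG H A) 4 c → IsProperColoring (indG H A) 4 c' →
      (∀ w, w ∉ A → c w = c' w) → KempeEquiv (indG H A) c c' := by
  intro n
  induction n with
  | zero =>
    intro A hA c c' _ _ hcc
    have hA0 : A = ∅ := Finset.card_eq_zero.1 (Nat.le_zero.1 hA)
    have hcc' : c = c' := funext fun w => hcc w (by simp [hA0])
    rw [hcc']
    exact Relation.ReflTransGen.refl
  | succ n ih =>
    intro A hA c c' hc hc' hcc
    by_cases hne : A.Nonempty
    · obtain ⟨v, hvA, u1, u2, u3, hnb⟩ := hdeg A hne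
      classical
      have hcB : IsProperColoring (indG H (A.erase v)) 4 c := by
        intro a b hab
        exact hc ⟨hab.1, Finset.mem_of_mem_erase hab.2.1, Finset.mem_of_mem_erase hab.2.2⟩
      have hdB : IsProperColoring (indG H (A.erase v)) 4
          (fun w => if w = v then c v else c' w) := by
        intro a b hab
        have ha := Finset.ne_of_mem_erase hab.2.1
        have hb := Finset.ne_of_mem_erase hab.2.2
        simp only [if_neg ha, if_neg hb]
        exact hc' ⟨hab.1, Finset.mem_of_mem_erase hab.2.1, Finset.mem_of_mem_erase hab.2.2⟩
      have hcd : ∀ w, w ∉ A.erase v → c w = (fun w => if w = v then c v else c' w) w := by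
        intro w hw
        by_cases hwv : w = v
        · rw [hwv]; simp
        · have hwA : w ∉ A := fun h => hw (Finset.mem_erase.2 ⟨hwv, h⟩)
          simp only [if_neg hwv]
          exact hcc w hwA
      have hcard : (A.erase v).card ≤ n := by
        have h1 := Finset.card_erase_of_mem hvA
        have h2 : 1 ≤ A.card := Finset.card_pos.2 hne
        omega
      have hEq := ih (A.erase v) hcard c (fun w => if w = v then c v else c' w) hcB hdB hcd
      obtain ⟨z', he, hzd, hzp⟩ := chain_lift u1 u2 u3 hnb hEq c (fun _ _ => rfl) hc
      have hz'c' : ∀ w, w ≠ v → z' w = c' w := by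
        intro w hw
        rw [hzd w hw]
        simp only [if_neg hw]
      by_cases hfin : z' v = c' v
      · have : z' = c' := funext fun w => by
          by_cases hwv : w = v
          · rw [hwv]; exact hfin
          · exact hz'c' w hwv
        rw [← this]
        exact he
      · have hiso : ∀ u, ¬ (twoColorSub (indG H A) z' (z' v) (c' v)).Adj v u := by
          rintro u ⟨hadj, _, hcu⟩
          have hune : u ≠ v := hadj.1.ne'
          rcases hcu with h | h
          · exact hzp hadj h.symm
          · rw [hz'c' u hune] at h
            exact hc' hadj h.symm
        refine he.tail ⟨z' v, c' v, hfin, v, ?_, ?_⟩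
        · intro w hw
          have hwv : w = v := reach_eq_of_isolated hiso hw
          rw [hwv]
          exact ⟨fun _ => rfl, fun h => absurd h hfin, fun h _ => absurd rfl h⟩
        · intro w hw
          have hwv : w ≠ v := by rintro rfl; exact hw (SimpleGraph.Reachable.refl _)
          exact (hz'c' w hwv).symm
    · have hA0 : A = ∅ := Finset.not_nonempty_iff_eq_empty.1 hne
      have hcc' : c = c' := funext fun w => hcc w (by simp [hA0])
      rw [hcc']
      exact Relation.ReflTransGen.refl

end KempeAux4
section KempeAux5

lemma doubleStar_deg {V : Type*} (G : SimpleGraph V) :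
    ∀ A : Finset (G.Dart ⊕ V × Fin 2), A.Nonempty →
      ∃ v, v ∈ A ∧ ∃ u1 u2 u3, ∀ u, (doubleStar G).Adj v u → u ∈ A →
        u = u1 ∨ u = u2 ∨ u = u3 := by
  intro A hA
  by_cases hd : ∃ d : G.Dart, Sum.inl d ∈ A
  · obtain ⟨d, hdA⟩ := hd
    refine ⟨Sum.inl d, hdA, Sum.inl d.symm, Sum.inr (d.fst, 0), Sum.inr (d.fst, 1), ?_⟩
    intro u hadj _
    rw [doubleStar, SimpleGraph.fromRel_adj] at hadj
    obtain ⟨hne, h | h⟩ := hadj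
    · rcases h with ⟨d', h1, h2⟩ | ⟨d', p, h1, h2, h3⟩ | ⟨w, h1, h2⟩
      · obtain rfl : d = d' := Sum.inl.inj h1
        left; exact h2
      · obtain rfl : d = d' := Sum.inl.inj h1
        obtain ⟨pv, pe⟩ := p
        obtain rfl : d.fst = pv := h3
        rw [h2]
        fin_cases pe
        · right; left; rfl
        · right; right; rfl
      · simp at h1
    · rcases h with ⟨d', h1, h2⟩ | ⟨d', p, h1, h2, h3⟩ | ⟨w, h1, h2⟩
      · have hd' : d = d'.symm := Sum.inl.inj h2
        have : d' = d.symm := by rw [hd', SimpleGraph.Dart.symm_symm]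
        left; rw [h1, this]
      · simp at h2
      · simp at h2
  · obtain ⟨a, haA⟩ := hA
    cases a with
    | inl d => exact absurd ⟨d, haA⟩ hd
    | inr pr =>
      obtain ⟨w, e⟩ := pr
      refine ⟨Sum.inr (w, e), haA, Sum.inr (w, 0), Sum.inr (w, 1), Sum.inr (w, e), ?_⟩
      intro u hadj huA
      cases u with
      | inl d' => exact absurd ⟨d', huA⟩ hd
      | inr q =>
        rw [doubleStar, SimpleGraph.fromRel_adj] at hadj
        obtain ⟨hne, h | h⟩ := hadj
        · rcases h with ⟨d', h1, _⟩ | ⟨d', p, h1, _, _⟩ | ⟨w', h1, h2⟩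
          · simp at h1
          · simp at h1
          · obtain ⟨hw1, _⟩ := Prod.mk.injEq .. ▸ Sum.inr.inj h1
            rw [h2, ← hw1]
            right; left; rfl
        · rcases h with ⟨d', h1, h2⟩ | ⟨d', p, h1, h2, h3⟩ | ⟨w', h1, h2⟩
          · simp at h2
          · simp at h1
          · obtain ⟨hw1, _⟩ := Prod.mk.injEq .. ▸ Sum.inr.inj h2
            rw [h1, ← hw1]
            left; rfl

end KempeAux5

/-- For every connected graph `G`, every two proper `4`-colorings of
`G**` are Kempe equivalent. -/
theorem kempe_equiv_doubleStar {V : Type*} [Fintype V] (G : SimpleGraph V)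
    (hG : G.Connected)
    (c c' : G.Dart ⊕ V × Fin 2 → Fin 4)
    (hc : IsProperColoring (doubleStar G) 4 c)
    (hc' : IsProperColoring (doubleStar G) 4 c') :
    KempeEquiv (doubleStar G) c c' := by
  classical
  haveI : DecidableRel G.Adj := Classical.decRel _
  have huniv : indG (doubleStar G) Finset.univ = doubleStar G := by
    ext a b
    show (doubleStar G).Adj a b ∧ _ ∧ _ ↔ (doubleStar G).Adj a b
    simp
  rw [← huniv] at hc hc' ⊢
  exact main_ind (doubleStar_deg G) Finset.univ.card Finset.univ le_rfl c c' hc hc'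
    (fun w hw => absurd (Finset.mem_univ w) hw)
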